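/- Let G be a game in G_unit with T ≥ 1 and let k = ⌊T⌋. For every tie-breaking rule M and every Nash equilibrium σ with respect to M, val(OPT) ≤ (3 − 2/k)·val(σ) and val(OPT) ≤ (3 − 2/c)·val(σ); that is, the price of anarchy of G is at most min{3 − 2/k, 3 − 2/c}. -/

import Mathlib

open Classical

/-- An interval scheduling game: jobs `Fin n`, colors `Fin c`, horizon `[0, T)`,
and for each job a color, a length and a weight. -/
structure Game where
  n : ℕ
  c : ℕ
  T : ℝ
  T_pos : 0 < T
  color : Fin n → Fin c
  len : Fin n → ℝ
  wt : Fin n → ℝ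
  len_nonneg : ∀ j, 0 ≤ len j
  len_le_T : ∀ j, len j ≤ T
  wt_nonneg : ∀ j, 0 ≤ wt j

/-- A strategy profile assigns a feasible start time to every job, so that job `j`
occupies `[start j, start j + len j) ⊆ [0, T)`. -/
structure Game.Profile (G : Game) where
  start : Fin G.n → ℝ
  start_nonneg : ∀ j, 0 ≤ start j
  start_le : ∀ j, start j + G.len j ≤ G.T

/-- A machine configuration assigns a color to every time point. -/
abbrev Game.Config (G : Game) : Type := ℝ → Fin G.c

/-- Job `j` is covered if the machine is configured to its color throughout its
processing interval `[start j, start j + len j)`. -/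
def Game.Covered (G : Game) (s : G.Profile) (γ : G.Config) (j : Fin G.n) : Prop :=
  ∀ t : ℝ, s.start j ≤ t → t < s.start j + G.len j → γ t = G.color j

/-- The profit of a configuration: total weight of covered jobs. -/
noncomputable def Game.profit (G : Game) (s : G.Profile) (γ : G.Config) : ℝ :=
  ∑ j : Fin G.n, if G.Covered s γ j then G.wt j else 0

/-- The value of a profile: the maximal profit over machine configurations. -/
noncomputable def Game.val (G : Game) (s : G.Profile) : ℝ :=
  sSup {x : ℝ | ∃ γ : G.Config, x = G.profit s γ}

/-- The social optimum value: the maximal value over strategy profiles. -/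
noncomputable def Game.valOPT (G : Game) : ℝ :=
  sSup {x : ℝ | ∃ s : G.Profile, x = G.val s}

/-- A tie-breaking rule selects, for every profile, a configuration of maximal profit. -/
structure Game.TieBreak (G : Game) where
  choice : G.Profile → G.Config
  choice_opt : ∀ s : G.Profile, G.profit s (choice s) = G.val s

/-- Utility of player `i` under tie-breaking rule `M`: total weight of covered jobs
of color `i`. -/
noncomputable def Game.utility (G : Game) (M : G.TieBreak) (i : Fin G.c) (s : G.Profile) : ℝ :=
  ∑ j : Fin G.n, if G.color j = i ∧ G.Covered s (M.choice s) j then G.wt j else 0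

/-- Nash equilibrium with respect to tie-breaking rule `M`: no player can strictly
increase its utility by relocating only the jobs of its own color. -/
def Game.IsNE (G : Game) (M : G.TieBreak) (s : G.Profile) : Prop :=
  ∀ (i : Fin G.c) (s' : G.Profile),
    (∀ j, G.color j ≠ i → s'.start j = s.start j) →
      G.utility M i s' ≤ G.utility M i s

/-- The class `G_single`: exactly one job of each color (`n = c`). -/
def Game.Single (G : Game) : Prop := Function.Bijective G.color

namespace PoAAux

lemma ite0 {P : Prop} [Decidable P] {w : ℝ} (h : 0 ≤ w) :
    0 ≤ if P then w else 0 := by split_ifs <;> simp [h]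

variable (G : Game)

lemma profit_le_total (p : G.Profile) (g : G.Config) :
    G.profit p g ≤ ∑ j : Fin G.n, G.wt j :=
  Finset.sum_le_sum fun j _ => by split_ifs <;> simp [G.wt_nonneg j]

lemma bdd (p : G.Profile) : BddAbove {x : ℝ | ∃ γ : G.Config, x = G.profit p γ} :=
  ⟨∑ j : Fin G.n, G.wt j, by rintro x ⟨γ, rfl⟩; exact profit_le_total G p γ⟩

lemma profit_le_val (p : G.Profile) (g : G.Config) : G.profit p g ≤ G.val p :=
  le_csSup (bdd G p) ⟨g, rfl⟩

/-- Key NE lemma: for every color `i` and feasible window start `a`,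
the total weight of color `i` is at most the NE utility of `i` plus the NE-covered
weight of other colors near the window. -/
lemma key (hunit : ∀ j, G.len j = 1) (M : G.TieBreak) (s : G.Profile)
    (hNE : G.IsNE M s) (i : Fin G.c) (a : ℝ) (ha : 0 ≤ a) (haT : a + 1 ≤ G.T) :
    (∑ j : Fin G.n, if G.color j = i then G.wt j else 0)
      ≤ G.utility M i s +
        ∑ j : Fin G.n, if G.color j ≠ i ∧ G.Covered s (M.choice s) j ∧ |s.start j - a| < 1
             then G.wt j else 0 := by
  have hY0 : 0 ≤ ∑ j : Fin G.n,
      if G.color j ≠ i ∧ G.Covered s (M.choice s) j ∧ |s.start j - a| < 1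
      then G.wt j else 0 := Finset.sum_nonneg fun j _ => ite0 (G.wt_nonneg j)
  -- the deviation profile: all jobs of color i stacked at [a, a+1)
  let s' : G.Profile :=
    { start := fun j => if G.color j = i then a else s.start j
      start_nonneg := by
        intro j; split_ifs
        · exact ha
        · exact s.start_nonneg j
      start_le := by
        intro j; rw [hunit j]; split_ifs with h
        · exact haT
        · have := s.start_le j; rw [hunit j] at this; exact this }
  have hs'eq : ∀ j, G.color j ≠ i → s'.start j = s.start j := by
    intro j h; simp only [s']; rw [if_neg h]
  have hs'i : ∀ j, G.color j = i → s'.start j = a := by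
    intro j h; simp only [s']; rw [if_pos h]
  by_cases hcase : ∀ t : ℝ, a ≤ t → t < a + 1 → M.choice s' t = i
  · -- Case 1: the machine serves color i throughout the window after deviation
    have hub := hNE i s' hs'eq
    have h2 : G.utility M i s' = ∑ j : Fin G.n, if G.color j = i then G.wt j else 0 := by
      unfold Game.utility
      refine Finset.sum_congr rfl fun j _ => ?_
      by_cases h : G.color j = i
      · rw [if_pos h, if_pos]
        refine ⟨h, ?_⟩
        intro t ht1 ht2
        rw [hs'i j h] at ht1
        rw [hs'i j h, hunit j] at ht2
        rw [hcase t ht1 ht2, h]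
      · rw [if_neg h, if_neg (fun hc => h hc.1)]
    rw [h2] at hub
    linarith
  · -- Case 2
    push_neg at hcase
    obtain ⟨t0, ht0a, ht0b, ht0c⟩ := hcase
    set γ0 := M.choice s with hγ0
    set γ' := M.choice s' with hγ'
    -- the test configuration
    set γt : G.Config := fun t => if a ≤ t ∧ t < a + 1 then i else γ0 t with hγt
    -- Step A : lower bound on profit s' γt
    have hA : (∑ j : Fin G.n,
        if G.color j = i then G.wt j
        else if G.Covered s γ0 j ∧ ¬(|s.start j - a| < 1) then G.wt j else 0)
        ≤ G.profit s' γt := by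
      unfold Game.profit
      refine Finset.sum_le_sum fun j _ => ?_
      by_cases h : G.color j = i
      · rw [if_pos h, if_pos]
        intro t ht1 ht2
        rw [hs'i j h] at ht1
        rw [hs'i j h, hunit j] at ht2
        simp only [γt]
        rw [if_pos ⟨ht1, ht2⟩, h]
      · rw [if_neg h]
        by_cases h2 : G.Covered s γ0 j ∧ ¬(|s.start j - a| < 1)
        · rw [if_pos h2, if_pos]
          intro t ht1 ht2
          rw [hs'eq j h] at ht1
          rw [hs'eq j h, hunit j] at ht2
          have hfar : ¬(a ≤ t ∧ t < a + 1) := by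
            rintro ⟨hfa, hfb⟩
            rcases le_abs.mp (not_lt.mp h2.2) with hl | hl
            · linarith
            · rw [neg_sub] at hl; linarith
          simp only [γt]
          rw [if_neg hfar]
          exact h2.1 t ht1 (by rw [hunit j]; exact ht2)
        · rw [if_neg h2]
          exact ite0 (G.wt_nonneg j)
    have hB : G.profit s' γt ≤ G.profit s' γ' := by
      calc G.profit s' γt ≤ G.val s' := profit_le_val G s' γt
        _ = G.profit s' γ' := (M.choice_opt s').symm
    have hC : G.profit s' γ' ≤ G.profit s γ' := by
      unfold Game.profit
      refine Finset.sum_le_sum fun j _ => ?_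
      by_cases h : G.color j = i
      · rw [if_neg]
        · exact ite0 (G.wt_nonneg j)
        · intro hcov
          apply ht0c
          have := hcov t0 (by rw [hs'i j h]; exact ht0a)
            (by rw [hs'i j h, hunit j]; exact ht0b)
          rw [this, h]
      · have heq : G.Covered s' γ' j ↔ G.Covered s γ' j := by
          unfold Game.Covered
          rw [hs'eq j h]
        by_cases hcov : G.Covered s γ' j
        · rw [if_pos (heq.mpr hcov), if_pos hcov]
        · rw [if_neg (fun hx => hcov (heq.mp hx)), if_neg hcov]
    have hD : G.profit s γ' ≤ G.profit s γ0 := by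
      calc G.profit s γ' ≤ G.val s := profit_le_val G s γ'
        _ = G.profit s γ0 := by rw [hγ0, M.choice_opt s]
    have hE : (∑ j : Fin G.n,
        if G.color j = i then G.wt j
        else if G.Covered s γ0 j ∧ ¬(|s.start j - a| < 1) then G.wt j else 0)
        + G.utility M i s
        + (∑ j : Fin G.n, if G.color j ≠ i ∧ G.Covered s γ0 j ∧ |s.start j - a| < 1
            then G.wt j else 0)
        = (∑ j : Fin G.n, if G.color j = i then G.wt j else 0) + G.profit s γ0 := by
      unfold Game.utility Game.profit
      rw [← hγ0]
      rw [← Finset.sum_add_distrib, ← Finset.sum_add_distrib, ← Finset.sum_add_distrib]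
      refine Finset.sum_congr rfl fun j _ => ?_
      by_cases h1 : G.color j = i <;> by_cases h2 : G.Covered s γ0 j <;>
        by_cases h3 : |s.start j - a| < 1 <;>
        simp [h1, h2, h3]
    linarith

lemma near_count (d x : ℝ) (hd : 1 ≤ d) (r : ℕ) :
    ((Finset.range r).filter (fun m : ℕ => |x - (m : ℝ) * d| < 1)).card ≤ 2 := by
  set F := (Finset.range r).filter (fun m : ℕ => |x - (m : ℝ) * d| < 1) with hF
  by_cases hne : F.Nonempty
  · have hsub : F ⊆ Finset.Icc (F.min' hne) (F.min' hne + 1) := by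
      intro m hm
      refine Finset.mem_Icc.mpr ⟨F.min'_le m hm, ?_⟩
      by_contra hcon
      push_neg at hcon
      have h2 : F.min' hne + 2 ≤ m := hcon
      have hm0 : |x - (F.min' hne : ℝ) * d| < 1 := (Finset.mem_filter.mp (F.min'_mem hne)).2
      have hmm : |x - (m : ℝ) * d| < 1 := (Finset.mem_filter.mp hm).2
      rw [abs_lt] at hm0 hmm
      have hcast : (F.min' hne : ℝ) + 2 ≤ (m : ℝ) := by exact_mod_cast h2
      nlinarith [hm0.1, hm0.2, hmm.1, hmm.2]
    calc F.card ≤ (Finset.Icc (F.min' hne) (F.min' hne + 1)).card :=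
          Finset.card_le_card hsub
      _ = 2 := by rw [Nat.card_Icc]; omega
  · rw [Finset.not_nonempty_iff_eq_empty] at hne
    rw [hne]; simp

lemma cardC_le_floor (hunit : ∀ j, G.len j = 1) (p : G.Profile) (g : G.Config) :
    ((Finset.univ.filter (fun j => G.Covered p g j)).image G.color).card ≤ ⌊G.T⌋₊ := by
  rw [← Finset.card_range ⌊G.T⌋₊]
  apply Finset.card_le_card_of_injOn
    (fun i => if h : ∃ j, G.Covered p g j ∧ G.color j = i
              then ⌊p.start h.choose⌋₊ else 0)
  · intro i hi
    rw [Finset.mem_coe, Finset.mem_image] at hi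
    obtain ⟨j, hj, hji⟩ := hi
    rw [Finset.mem_filter] at hj
    have hex : ∃ j, G.Covered p g j ∧ G.color j = i := ⟨j, hj.2, hji⟩
    simp only [Finset.mem_coe]; rw [dif_pos hex, Finset.mem_range]
    have hstart : p.start hex.choose + 1 ≤ G.T := by
      have := p.start_le hex.choose; rwa [hunit hex.choose] at this
    rw [Nat.floor_lt (p.start_nonneg hex.choose)]
    have := Nat.lt_floor_add_one G.T
    linarith
  · intro i1 hi1 i2 hi2 hf
    rw [Finset.mem_coe, Finset.mem_image] at hi1 hi2
    obtain ⟨j1, hj1, hji1⟩ := hi1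
    obtain ⟨j2, hj2, hji2⟩ := hi2
    rw [Finset.mem_filter] at hj1 hj2
    have hex1 : ∃ j, G.Covered p g j ∧ G.color j = i1 := ⟨j1, hj1.2, hji1⟩
    have hex2 : ∃ j, G.Covered p g j ∧ G.color j = i2 := ⟨j2, hj2.2, hji2⟩
    simp only [dif_pos hex1, dif_pos hex2] at hf
    obtain ⟨hcov1, hcol1⟩ := hex1.choose_spec
    obtain ⟨hcov2, hcol2⟩ := hex2.choose_spec
    set x1 := p.start hex1.choose with hx1
    set x2 := p.start hex2.choose with hx2
    have h01 : 0 ≤ x1 := p.start_nonneg _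
    have h02 : 0 ≤ x2 := p.start_nonneg _
    have hfl1 : (⌊x1⌋₊ : ℝ) ≤ x1 := Nat.floor_le h01
    have hfl2 : (⌊x2⌋₊ : ℝ) ≤ x2 := Nat.floor_le h02
    have hlt1 : x1 < ⌊x1⌋₊ + 1 := Nat.lt_floor_add_one x1
    have hlt2 : x2 < ⌊x2⌋₊ + 1 := Nat.lt_floor_add_one x2
    have hcast : (⌊x1⌋₊ : ℝ) = (⌊x2⌋₊ : ℝ) := by exact_mod_cast hf
    have h12 : x1 < x2 + 1 := by linarith
    have h21 : x2 < x1 + 1 := by linarith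
    have ht1 : g (max x1 x2) = i1 := by
      rw [← hcol1]
      exact hcov1 (max x1 x2) (le_max_left _ _)
        (by rw [hunit hex1.choose, ← hx1]; exact max_lt (by linarith) h21)
    have ht2 : g (max x1 x2) = i2 := by
      rw [← hcol2]
      exact hcov2 (max x1 x2) (le_max_right _ _)
        (by rw [hunit hex2.choose, ← hx2]; exact max_lt h12 (by linarith))
    rw [← ht1, ht2]

lemma profit_nonneg (p : G.Profile) (g : G.Config) : 0 ≤ G.profit p g :=
  Finset.sum_nonneg fun j _ => ite0 (G.wt_nonneg j)

lemma utility_nonneg (M : G.TieBreak) (i : Fin G.c) (p : G.Profile) :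
    0 ≤ G.utility M i p :=
  Finset.sum_nonneg fun j _ => ite0 (G.wt_nonneg j)

lemma val_le (hc : 0 < G.c) (p : G.Profile) {B : ℝ}
    (h : ∀ g : G.Config, G.profit p g ≤ B) : G.val p ≤ B :=
  csSup_le ⟨G.profit p (fun _ => ⟨0, hc⟩), ⟨_, rfl⟩⟩ (by rintro x ⟨g, rfl⟩; exact h g)

noncomputable def Wt (G : Game) (i : Fin G.c) : ℝ :=
  ∑ j : Fin G.n, if G.color j = i then G.wt j else 0

noncomputable def Yt (G : Game) (M : G.TieBreak) (s : G.Profile) (i : Fin G.c) (a : ℝ) : ℝ :=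
  ∑ j : Fin G.n, if G.color j ≠ i ∧ G.Covered s (M.choice s) j ∧ |s.start j - a| < 1
                 then G.wt j else 0

noncomputable def uAt (G : Game) (M : G.TieBreak) (s : G.Profile) (i : Fin G.c) : ℝ :=
  ∑ j : Fin G.n, if G.color j ≠ i ∧ G.Covered s (M.choice s) j then G.wt j else 0

lemma split_v (M : G.TieBreak) (s : G.Profile) (i : Fin G.c) :
    G.profit s (M.choice s) = G.utility M i s + uAt G M s i := by
  unfold Game.profit Game.utility uAt
  rw [← Finset.sum_add_distrib]
  refine Finset.sum_congr rfl fun j _ => ?_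
  by_cases h1 : G.color j = i <;> by_cases h2 : G.Covered s (M.choice s) j <;>
    simp [h1, h2]

lemma Yt_le_uAt (M : G.TieBreak) (s : G.Profile) (i : Fin G.c) (a : ℝ) :
    Yt G M s i a ≤ uAt G M s i := by
  unfold Yt uAt
  refine Finset.sum_le_sum fun j _ => ?_
  by_cases h : G.color j ≠ i ∧ G.Covered s (M.choice s) j ∧ |s.start j - a| < 1
  · rw [if_pos h, if_pos ⟨h.1, h.2.1⟩]
  · rw [if_neg h]; exact ite0 (G.wt_nonneg j)

lemma sumY (M : G.TieBreak) (s : G.Profile) (i : Fin G.c) (r : ℕ) (d : ℝ) (hd : 1 ≤ d) :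
    ∑ m ∈ Finset.range r, Yt G M s i ((m : ℝ) * d) ≤ 2 * uAt G M s i := by
  unfold Yt uAt
  rw [Finset.sum_comm, Finset.mul_sum]
  refine Finset.sum_le_sum fun j _ => ?_
  by_cases hA : G.color j ≠ i ∧ G.Covered s (M.choice s) j
  · have h1 : ∑ m ∈ Finset.range r,
        (if G.color j ≠ i ∧ G.Covered s (M.choice s) j ∧ |s.start j - (m:ℝ)*d| < 1
         then G.wt j else 0)
        = ∑ m ∈ Finset.range r, (if |s.start j - (m:ℝ)*d| < 1 then G.wt j else 0) := by
      refine Finset.sum_congr rfl fun m _ => ?_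
      refine if_congr ?_ rfl rfl
      constructor
      · exact fun h => h.2.2
      · exact fun h => ⟨hA.1, hA.2, h⟩
    rw [h1, ← Finset.sum_filter, Finset.sum_const, nsmul_eq_mul, if_pos hA]
    have hcount := near_count d (s.start j) hd r
    have : (((Finset.range r).filter (fun m : ℕ => |s.start j - (m:ℝ)*d| < 1)).card : ℝ) ≤ 2 := by
      exact_mod_cast hcount
    nlinarith [G.wt_nonneg j]
  · have h1 : ∑ m ∈ Finset.range r,
        (if G.color j ≠ i ∧ G.Covered s (M.choice s) j ∧ |s.start j - (m:ℝ)*d| < 1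
         then G.wt j else 0) = 0 :=
      Finset.sum_eq_zero fun m _ => if_neg (fun hc => hA ⟨hc.1, hc.2.1⟩)
    rw [h1, if_neg hA]
    norm_num

lemma sum_util_le (M : G.TieBreak) (s : G.Profile) (S : Finset (Fin G.c)) :
    ∑ i ∈ S, G.utility M i s ≤ G.profit s (M.choice s) := by
  unfold Game.utility Game.profit
  rw [Finset.sum_comm]
  refine Finset.sum_le_sum fun j _ => ?_
  by_cases hc : G.Covered s (M.choice s) j
  · have h1 : ∑ i ∈ S, (if G.color j = i ∧ G.Covered s (M.choice s) j then G.wt j else 0)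
        = ∑ i ∈ S, (if G.color j = i then G.wt j else 0) :=
      Finset.sum_congr rfl fun i _ => by simp [hc]
    rw [h1, Finset.sum_ite_eq, if_pos hc]
    split_ifs <;> simp [G.wt_nonneg j]
  · have h1 : ∑ i ∈ S, (if G.color j = i ∧ G.Covered s (M.choice s) j then G.wt j else 0) = 0 :=
      Finset.sum_eq_zero fun i _ => if_neg (fun h => hc h.2)
    rw [h1, if_neg hc]

lemma profit_le_sumW (p : G.Profile) (g : G.Config) :
    G.profit p g ≤
      ∑ i ∈ (Finset.univ.filter (fun j => G.Covered p g j)).image G.color, Wt G i := by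
  unfold Game.profit Wt
  rw [Finset.sum_comm]
  refine Finset.sum_le_sum fun j _ => ?_
  by_cases hc : G.Covered p g j
  · rw [if_pos hc]
    have hmem : G.color j ∈ (Finset.univ.filter (fun j => G.Covered p g j)).image G.color :=
      Finset.mem_image.mpr ⟨j, Finset.mem_filter.mpr ⟨Finset.mem_univ j, hc⟩, rfl⟩
    rw [Finset.sum_ite_eq, if_pos hmem]
  · rw [if_neg hc]
    exact Finset.sum_nonneg fun i _ => ite0 (G.wt_nonneg j)

lemma main_bound (hunit : ∀ j, G.len j = 1) (hT : 1 ≤ G.T) (M : G.TieBreak)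
    (s : G.Profile) (hNE : G.IsNE M s) (r : ℕ) (hr1 : 1 ≤ r)
    (hrT : (r : ℝ) ≤ G.T) (p : G.Profile) (g : G.Config)
    (hcard : ((Finset.univ.filter (fun j => G.Covered p g j)).image G.color).card ≤ r) :
    G.profit p g ≤ (3 - 2 / (r : ℝ)) * G.profit s (M.choice s) := by
  set v := G.profit s (M.choice s) with hv
  set Cstar := (Finset.univ.filter (fun j => G.Covered p g j)).image G.color with hC
  have hv0 : 0 ≤ v := profit_nonneg G s (M.choice s)
  have hkey : ∀ (i : Fin G.c) (a : ℝ), 0 ≤ a → a + 1 ≤ G.T →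
      Wt G i ≤ G.utility M i s + Yt G M s i a := by
    intro i a h1 h2
    unfold Wt Yt
    exact key G hunit M s hNE i a h1 h2
  have hsplit : ∀ i, v = G.utility M i s + uAt G M s i := fun i => split_v G M s i
  have h6 : G.profit p g ≤ ∑ i ∈ Cstar, Wt G i := profit_le_sumW G p g
  have hUle : ∑ i ∈ Cstar, G.utility M i s ≤ v := sum_util_le G M s Cstar
  have hU0 : 0 ≤ ∑ i ∈ Cstar, G.utility M i s :=
    Finset.sum_nonneg fun i _ => utility_nonneg G M i s
  have hcard' : (Cstar.card : ℝ) ≤ (r : ℝ) := by exact_mod_cast hcard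
  rcases eq_or_lt_of_le hr1 with hr1' | hr2
  · -- r = 1
    have hWv : ∀ i, Wt G i ≤ v := by
      intro i
      have h1 := hkey i (G.T - 1) (by linarith) (by linarith)
      have h2 := Yt_le_uAt G M s i (G.T - 1)
      have h3 := hsplit i
      linarith
    have h7 : ∑ i ∈ Cstar, Wt G i ≤ (Cstar.card : ℝ) * v := by
      calc ∑ i ∈ Cstar, Wt G i ≤ ∑ _i ∈ Cstar, v := Finset.sum_le_sum fun i _ => hWv i
        _ = Cstar.card • v := Finset.sum_const v
        _ = (Cstar.card : ℝ) * v := nsmul_eq_mul _ _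
    have h8 : (3 - 2 / (r : ℝ)) = 1 := by rw [← hr1']; norm_num
    rw [h8, one_mul]
    have : (Cstar.card : ℝ) * v ≤ 1 * v := by
      apply mul_le_mul_of_nonneg_right _ hv0
      rw [← hr1'] at hcard'
      exact_mod_cast hcard'
    linarith
  · -- 2 ≤ r
    have hr2' : (2 : ℝ) ≤ (r : ℝ) := by exact_mod_cast hr2
    set d := (G.T - 1) / ((r : ℝ) - 1) with hd'
    have hrpos : (0 : ℝ) < (r : ℝ) - 1 := by linarith
    have hd1 : 1 ≤ d := by rw [hd', le_div_iff₀ hrpos]; linarith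
    have hfeas : ∀ m ∈ Finset.range r, 0 ≤ (m : ℝ) * d ∧ (m : ℝ) * d + 1 ≤ G.T := by
      intro m hm
      have hm' : (m : ℝ) ≤ (r : ℝ) - 1 := by
        rw [Finset.mem_range] at hm
        have : (m : ℝ) + 1 ≤ (r : ℝ) := by exact_mod_cast hm
        linarith
      constructor
      · exact mul_nonneg (Nat.cast_nonneg m) (by linarith)
      · have h1 : (m : ℝ) * d ≤ ((r : ℝ) - 1) * d :=
          mul_le_mul_of_nonneg_right hm' (by linarith)
        have h2 : ((r : ℝ) - 1) * d = G.T - 1 := by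
          rw [hd']; field_simp
        linarith
    have hri : ∀ i, (r : ℝ) * Wt G i ≤ (r : ℝ) * G.utility M i s + 2 * uAt G M s i := by
      intro i
      have h1 : (r : ℝ) * Wt G i = ∑ _m ∈ Finset.range r, Wt G i := by
        rw [Finset.sum_const, Finset.card_range, nsmul_eq_mul]
      have h2 : ∑ _m ∈ Finset.range r, Wt G i
          ≤ ∑ m ∈ Finset.range r, (G.utility M i s + Yt G M s i ((m : ℝ) * d)) :=
        Finset.sum_le_sum fun m hm => hkey i ((m : ℝ) * d) (hfeas m hm).1 (hfeas m hm).2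
      have h3 : ∑ m ∈ Finset.range r, (G.utility M i s + Yt G M s i ((m : ℝ) * d))
          = (r : ℝ) * G.utility M i s + ∑ m ∈ Finset.range r, Yt G M s i ((m : ℝ) * d) := by
        rw [Finset.sum_add_distrib, Finset.sum_const, Finset.card_range, nsmul_eq_mul]
      have h4 := sumY G M s i r d hd1
      linarith
    have hsum : (r : ℝ) * (∑ i ∈ Cstar, Wt G i)
        ≤ (r : ℝ) * (∑ i ∈ Cstar, G.utility M i s) + 2 * (∑ i ∈ Cstar, uAt G M s i) := by
      rw [Finset.mul_sum, Finset.mul_sum, Finset.mul_sum, ← Finset.sum_add_distrib]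
      exact Finset.sum_le_sum fun i _ => hri i
    have hsum2 : ∑ i ∈ Cstar, uAt G M s i
        = (Cstar.card : ℝ) * v - ∑ i ∈ Cstar, G.utility M i s := by
      have : ∑ i ∈ Cstar, uAt G M s i = ∑ i ∈ Cstar, (v - G.utility M i s) :=
        Finset.sum_congr rfl fun i _ => by have := hsplit i; linarith
      rw [this, Finset.sum_sub_distrib, Finset.sum_const, nsmul_eq_mul]
    have hfin : (r : ℝ) * (∑ i ∈ Cstar, Wt G i) ≤ (3 * (r : ℝ) - 2) * v := by
      have e1 : ((r : ℝ) - 2) * (∑ i ∈ Cstar, G.utility M i s) ≤ ((r : ℝ) - 2) * v :=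
        mul_le_mul_of_nonneg_left hUle (by linarith)
      have e2 : (Cstar.card : ℝ) * v ≤ (r : ℝ) * v :=
        mul_le_mul_of_nonneg_right hcard' hv0
      nlinarith [hsum, hsum2]
    have hr0 : (0 : ℝ) < (r : ℝ) := by linarith
    have heq : (3 - 2 / (r : ℝ)) * v = ((3 * (r : ℝ) - 2) * v) / (r : ℝ) := by
      field_simp
    rw [heq, le_div_iff₀ hr0]
    calc G.profit p g * (r : ℝ) ≤ (∑ i ∈ Cstar, Wt G i) * (r : ℝ) :=
          mul_le_mul_of_nonneg_right h6 (le_of_lt hr0)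
      _ = (r : ℝ) * (∑ i ∈ Cstar, Wt G i) := mul_comm _ _
      _ ≤ (3 * (r : ℝ) - 2) * v := hfin

end PoAAux

/-- For unit-length games with `T ≥ 1` and `k = ⌊T⌋`, the price of anarchy is at
most `min (3 - 2/k) (3 - 2/c)`. -/
theorem unit_PoA_bound (G : Game) (hunit : ∀ j, G.len j = 1) (hT : 1 ≤ G.T)
    (M : G.TieBreak) (s : G.Profile) (hNE : G.IsNE M s) :
    G.valOPT ≤ (3 - 2 / (⌊G.T⌋₊ : ℝ)) * G.val s ∧
    G.valOPT ≤ (3 - 2 / (G.c : ℝ)) * G.val s := by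
  by_cases hc0 : G.c = 0
  · have hnoconf : ∀ γ : G.Config, False := by
      intro γ
      have h2 := (γ (0 : ℝ)).isLt
      omega
    have hval0 : ∀ p : G.Profile, G.val p = 0 := by
      intro p
      unfold Game.val
      have hempty : {x : ℝ | ∃ γ : G.Config, x = G.profit p γ} = ∅ := by
        ext x
        simp only [Set.mem_setOf_eq, Set.mem_empty_iff_false, iff_false, not_exists]
        exact fun γ _ => hnoconf γ
      rw [hempty, Real.sSup_empty]
    have hOPT : G.valOPT = 0 := by
      unfold Game.valOPT
      have hsing : {x : ℝ | ∃ p : G.Profile, x = G.val p} = {0} := by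
        ext x
        simp only [Set.mem_setOf_eq, Set.mem_singleton_iff]
        constructor
        · rintro ⟨p, rfl⟩; exact hval0 p
        · rintro rfl; exact ⟨s, (hval0 s).symm⟩
      rw [hsing, csSup_singleton]
    rw [hOPT, hval0 s]
    norm_num
  · have hc : 0 < G.c := Nat.pos_of_ne_zero hc0
    set k := ⌊G.T⌋₊ with hk
    have hk1 : 1 ≤ k := Nat.le_floor (by exact_mod_cast hT)
    set r := min k G.c with hr
    have hr1 : 1 ≤ r := le_min hk1 hc
    have hkT : (k : ℝ) ≤ G.T := Nat.floor_le (by linarith)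
    have hrT : (r : ℝ) ≤ G.T :=
      le_trans (by exact_mod_cast min_le_left k G.c) hkT
    have hv : G.val s = G.profit s (M.choice s) := (M.choice_opt s).symm
    have hv0 : 0 ≤ G.val s := by rw [hv]; exact PoAAux.profit_nonneg G s _
    have hmain : ∀ (p : G.Profile) (g : G.Config),
        G.profit p g ≤ (3 - 2 / (r : ℝ)) * G.val s := by
      intro p g
      rw [hv]
      apply PoAAux.main_bound G hunit hT M s hNE r hr1 hrT p g
      refine le_min (PoAAux.cardC_le_floor G hunit p g) ?_
      exact le_trans (Finset.card_le_univ _)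
        (le_of_eq (by simp))
    have hOPTle : G.valOPT ≤ (3 - 2 / (r : ℝ)) * G.val s := by
      unfold Game.valOPT
      refine csSup_le ⟨G.val s, s, rfl⟩ ?_
      rintro x ⟨p, rfl⟩
      exact PoAAux.val_le G hc p (hmain p)
    have hbound : ∀ m : ℕ, r ≤ m →
        (3 - 2 / (r : ℝ)) * G.val s ≤ (3 - 2 / (m : ℝ)) * G.val s := by
      intro m hm
      apply mul_le_mul_of_nonneg_right _ hv0
      have h1 : (0 : ℝ) < (r : ℝ) := by exact_mod_cast hr1
      have h2 : (r : ℝ) ≤ (m : ℝ) := by exact_mod_cast hm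
      have hm0 : (0 : ℝ) < (m : ℝ) := lt_of_lt_of_le h1 h2
      have h3 : (2 : ℝ) / (m : ℝ) ≤ 2 / (r : ℝ) := by
        rw [div_le_div_iff₀ hm0 h1]
        nlinarith
      linarith
    exact ⟨hOPTle.trans (hbound k (min_le_left _ _)),
           hOPTle.trans (hbound G.c (min_le_right _ _))⟩
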